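/- arXiv:1304.3543 — 9 statements merged into one kernel-verified Lean document; each statement's English description precedes it below -/
import Mathlib

section
/- Let a ∈ (0,1), set x = e^{2πia}, and let m be a positive integer. Then Z(−m, x) + (−1)^m · Z(−m, x^{−1}) = 0, where x^{−1} = e^{2πi(1−a)}. In particular, for even m, Z(−m, x) = −Z(−m, x^{−1}). -/
open Complex HurwitzZeta

lemma aux_neg (a : ℝ) : ((1 - a : ℝ) : UnitAddCircle) = -(a : UnitAddCircle) := by
  rw [sub_eq_add_neg, QuotientAddGroup.mk_add, QuotientAddGroup.mk_neg,
    AddCircle.coe_period, zero_add]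

/-- `Z(-m, x) + (-1)^m Z(-m, x⁻¹) = 0` for `x = e^{2πia}`, `a ∈ (0,1)`, and `m` a positive
integer; in particular `Z(-m, x) = -Z(-m, x⁻¹)` for even `m`. -/
theorem polylog_neg_functional (a : ℝ) (ha : a ∈ Set.Ioo (0 : ℝ) 1) (m : ℕ) (hm : 0 < m) :
    expZeta (a : UnitAddCircle) (-(m : ℂ))
        + (-1) ^ m * expZeta ((1 - a : ℝ) : UnitAddCircle) (-(m : ℂ)) = 0 ∧
    (Even m →
      expZeta (a : UnitAddCircle) (-(m : ℂ))
        = -expZeta ((1 - a : ℝ) : UnitAddCircle) (-(m : ℂ))) := by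
  have key : expZeta (a : UnitAddCircle) (-(m : ℂ))
        + (-1) ^ m * expZeta ((1 - a : ℝ) : UnitAddCircle) (-(m : ℂ)) = 0 := by
    rw [aux_neg, expZeta, expZeta, cosZeta_neg, sinZeta_neg]
    rcases Nat.even_or_odd m with he | ho
    · obtain ⟨k, hk⟩ := he
      obtain ⟨j, hj⟩ : ∃ j, k = j + 1 := ⟨k - 1, by omega⟩
      have h0 : cosZeta (a : UnitAddCircle) (-(m : ℂ)) = 0 := by
        have := cosZeta_neg_two_mul_nat_add_one (a : UnitAddCircle) j
        rw [show (-(m : ℂ)) = -2 * (j + 1) by subst hk hj; push_cast; ring]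
        exact this
      rw [h0, Even.neg_one_pow ⟨k, hk⟩]
      ring
    · obtain ⟨k, hk⟩ := ho
      have h0 : sinZeta (a : UnitAddCircle) (-(m : ℂ)) = 0 := by
        have := sinZeta_neg_two_mul_nat_sub_one (a : UnitAddCircle) k
        rw [show (-(m : ℂ)) = -2 * k - 1 by subst hk; push_cast; ring]
        exact this
      rw [h0, Odd.neg_one_pow ⟨k, hk⟩]
      ring
  refine ⟨key, fun he => ?_⟩
  rw [he.neg_one_pow, one_mul] at key
  linear_combination key
end

section
/- Let 0 < θ < π and let m be a positive even integer. Then (Z(1−m, e^{iθ}) − Z(1−m, e^{−iθ}))/(2i·sin θ) = 0. (This says that the Witten L-function ζ^W_{SU(2)}(s, g), for a regular element g of SU(2) with eigenvalues e^{±iθ}, vanishes at s = −m for every positive even integer m.) -/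
open Complex HurwitzZeta

/-- The Witten L-function of `SU(2)` at a regular element with eigenvalues `e^{±iθ}`
vanishes at `s = -m` for every positive even integer `m`. -/
theorem witten_SU2_L_vanishing (θ : ℝ) (hθ0 : 0 < θ) (hθπ : θ < Real.pi)
    (m : ℕ) (hm : 0 < m) (hme : Even m) :
    (expZeta ((θ / (2 * Real.pi) : ℝ) : UnitAddCircle) (1 - (m : ℂ))
        - expZeta ((1 - θ / (2 * Real.pi) : ℝ) : UnitAddCircle) (1 - (m : ℂ)))
      / (2 * I * (Real.sin θ : ℂ)) = 0 := by
  have ha : ((1 - θ / (2 * Real.pi) : ℝ) : UnitAddCircle)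
      = -((θ / (2 * Real.pi) : ℝ) : UnitAddCircle) := by simp
  obtain ⟨n, rfl⟩ := hme
  have hn : 0 < n := by omega
  have hs : (1 : ℂ) - ((n + n : ℕ) : ℂ) = -2 * ((n - 1 : ℕ) : ℂ) - 1 := by
    push_cast [Nat.cast_sub hn]
    ring
  rw [ha, hs]
  set a : UnitAddCircle := ((θ / (2 * Real.pi) : ℝ) : UnitAddCircle)
  have h1 := sinZeta_eq a (-2 * ((n - 1 : ℕ) : ℂ) - 1)
  rw [sinZeta_neg_two_mul_nat_sub_one] at h1
  have h2I : (2 * I : ℂ) ≠ 0 := by simp [I_ne_zero]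
  have h0 : expZeta a (-2 * ((n - 1 : ℕ) : ℂ) - 1)
      - expZeta (-a) (-2 * ((n - 1 : ℕ) : ℂ) - 1) = 0 :=
    (div_eq_zero_iff.mp h1.symm).resolve_right h2I
  rw [h0, zero_div]
end

section
/- The derivative of the Riemann zeta function at s = −2 equals −ζ(3)/(4π²). (This is the first derivative at s = −2 of the Witten L-function ζ^W_{SU(2)}(s, g) for g the identity element, i.e. θ = 0.) -/
open Complex

/-- The derivative of the Riemann zeta function at `s = -2` equals `-ζ(3)/(4π²)`. -/
theorem deriv_riemannZeta_neg_two :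
    deriv riemannZeta (-2) = -riemannZeta 3 / (4 * (Real.pi : ℂ) ^ 2) := by
  have hpi : (Real.pi : ℂ) ≠ 0 := ofReal_ne_zero.mpr Real.pi_ne_zero
  have h2pi : (2 * (Real.pi : ℂ)) ≠ 0 := by simp [hpi]
  have hev : (fun s => riemannZeta (1 - s)) =ᶠ[nhds (3 : ℂ)]
      (fun s => 2 * (2 * (Real.pi : ℂ)) ^ (-s) * Gamma s * cos ((Real.pi : ℂ) * s / 2) *
        riemannZeta s) := by
    have hopen : IsOpen {s : ℂ | 2 < s.re} := isOpen_lt continuous_const Complex.continuous_re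
    have hmem : (3 : ℂ) ∈ {s : ℂ | 2 < s.re} := by norm_num
    filter_upwards [hopen.mem_nhds hmem] with s hs
    have hs1 : s ≠ 1 := by intro h; rw [h] at hs; norm_num at hs
    have hsn : ∀ n : ℕ, s ≠ -n := by
      intro n h
      rw [h] at hs
      simp at hs
      have : (0:ℝ) ≤ (n:ℝ) := n.cast_nonneg
      linarith
    exact riemannZeta_one_sub hsn hs1
  have hG : HasDerivAt (fun s : ℂ => cos ((Real.pi : ℂ) * s / 2))
      (-sin ((Real.pi : ℂ) * 3 / 2) * ((Real.pi : ℂ) / 2)) 3 := by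
    have h1 : HasDerivAt (fun s : ℂ => (Real.pi : ℂ) * s / 2) ((Real.pi : ℂ) / 2) 3 := by
      simpa using ((hasDerivAt_id (3:ℂ)).const_mul (Real.pi : ℂ)).div_const 2
    exact (Complex.hasDerivAt_cos _).comp 3 h1
  have hF : DifferentiableAt ℂ (fun s : ℂ => 2 * (2 * (Real.pi : ℂ)) ^ (-s) * Gamma s) 3 := by
    have h1 : DifferentiableAt ℂ (fun s : ℂ => (2 * (Real.pi : ℂ)) ^ (-s)) 3 :=
      (differentiable_neg.differentiableAt).const_cpow (Or.inl h2pi)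
    have h2 : DifferentiableAt ℂ Gamma 3 := by
      apply Complex.differentiableAt_Gamma
      intro m h
      have := congrArg Complex.re h
      simp at this
      have : (0:ℝ) ≤ (m:ℝ) := m.cast_nonneg
      linarith
    exact (h1.const_mul 2).mul h2
  have hζ3 : DifferentiableAt ℂ riemannZeta 3 := differentiableAt_riemannZeta (by norm_num)
  have hRHS : HasDerivAt
      (fun s => 2 * (2 * (Real.pi : ℂ)) ^ (-s) * Gamma s * cos ((Real.pi : ℂ) * s / 2) *
        riemannZeta s)
      (((deriv (fun s : ℂ => 2 * (2 * (Real.pi : ℂ)) ^ (-s) * Gamma s) 3 *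
          cos ((Real.pi : ℂ) * 3 / 2)
        + (2 * (2 * (Real.pi : ℂ)) ^ (-(3:ℂ)) * Gamma 3) *
          (-sin ((Real.pi : ℂ) * 3 / 2) * ((Real.pi : ℂ) / 2))) * riemannZeta 3
        + (2 * (2 * (Real.pi : ℂ)) ^ (-(3:ℂ)) * Gamma 3 * cos ((Real.pi : ℂ) * 3 / 2)) *
          deriv riemannZeta 3)) 3 :=
    (hF.hasDerivAt.mul hG).mul hζ3.hasDerivAt
  have hLHS : HasDerivAt (fun s : ℂ => riemannZeta (1 - s)) (deriv riemannZeta (-2) * (-1)) 3 := by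
    have hζ : HasDerivAt riemannZeta (deriv riemannZeta (-2)) (-2) :=
      (differentiableAt_riemannZeta (by norm_num)).hasDerivAt
    have h1 : HasDerivAt (fun s : ℂ => 1 - s) (-1) 3 := by
      simpa using (hasDerivAt_id (3:ℂ)).const_sub 1
    have h2 : (1:ℂ) - 3 = -2 := by norm_num
    rw [← h2] at hζ
    have h3 := hζ.comp 3 h1
    rw [h2] at h3
    exact h3
  have hkey := hLHS.unique (hRHS.congr_of_eventuallyEq hev)
  -- simplify numerical values
  have hcos : cos ((Real.pi : ℂ) * 3 / 2) = 0 := by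
    have : (Real.pi : ℂ) * 3 / 2 = ((Real.pi * 3 / 2 : ℝ) : ℂ) := by push_cast; ring
    rw [this, ← Complex.ofReal_cos]
    norm_cast
    have : Real.pi * 3 / 2 = Real.pi / 2 + Real.pi := by ring
    rw [this, Real.cos_add_pi, Real.cos_pi_div_two, neg_zero]
  have hsin : sin ((Real.pi : ℂ) * 3 / 2) = -1 := by
    have : (Real.pi : ℂ) * 3 / 2 = ((Real.pi * 3 / 2 : ℝ) : ℂ) := by push_cast; ring
    rw [this, ← Complex.ofReal_sin]
    have h4 : Real.pi * 3 / 2 = Real.pi / 2 + Real.pi := by ring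
    rw [h4, Real.sin_add_pi, Real.sin_pi_div_two]
    norm_num
  have hGamma : Gamma (3 : ℂ) = 2 := by
    have := Complex.Gamma_nat_eq_factorial 2
    norm_num at this
    convert this using 2
    norm_num
  have hpow : (2 * (Real.pi : ℂ)) ^ (-(3:ℂ)) = (8 * (Real.pi : ℂ)^3)⁻¹ := by
    rw [cpow_neg]
    congr 1
    rw [show ((3:ℂ)) = ((3:ℕ):ℂ) by norm_num, cpow_natCast]
    ring
  rw [hcos, hsin, hGamma, hpow] at hkey
  have hπ2 : (4 * (Real.pi : ℂ) ^ 2) ≠ 0 := by simp [hpi]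
  field_simp at hkey
  rw [eq_div_iff hπ2]
  have h4pi : (4 * (Real.pi : ℂ)) ≠ 0 := by simp [hpi]
  apply mul_left_cancel₀ h4pi
  linear_combination (-2) * hkey
end

section
/- The derivative at s = −2 of the function s ↦ (1 − 2^{1−s})·ζ(s) equals 7ζ(3)/(4π²). (This is the first derivative at s = −2 of the Witten L-function ζ^W_{SU(2)}(s, g) for g = −I₂, i.e. θ = π, since ζ^W_{SU(2)}(s, −I₂) = Σ_{n≥1} (−1)^{n−1} n^{−s} = (1 − 2^{1−s})·ζ(s).) -/
open Complex

/-- The derivative at `s = -2` of `s ↦ (1 - 2^{1-s}) ζ(s)` equals `7ζ(3)/(4π²)`. -/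
theorem deriv_eta_neg_two :
    deriv (fun s : ℂ ↦ (1 - (2 : ℂ) ^ (1 - s)) * riemannZeta s) (-2)
      = 7 * riemannZeta 3 / (4 * (Real.pi : ℂ) ^ 2) := by
  have hπ : (Real.pi : ℂ) ≠ 0 := ofReal_ne_zero.mpr Real.pi_ne_zero
  -- the auxiliary smooth factor
  set c : ℂ → ℂ := fun s ↦
    (1 - (2 : ℂ) ^ (1 - s)) * (2 * (2 * (Real.pi : ℂ)) ^ (s - 1)) *
      Complex.Gamma (1 - s) * riemannZeta (1 - s) with hc
  -- eventual equality with the functional-equation expression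
  have hev : (fun s : ℂ ↦ (1 - (2 : ℂ) ^ (1 - s)) * riemannZeta s)
      =ᶠ[nhds (-2 : ℂ)] fun s ↦ c s * Complex.cos ((Real.pi : ℂ) * (1 - s) / 2) := by
    have hre : ∀ᶠ s : ℂ in nhds (-2 : ℂ), s.re < 0 := by
      have : Continuous fun s : ℂ ↦ s.re := Complex.continuous_re
      have := this.continuousAt (x := (-2 : ℂ))
      exact this.eventually_lt_const (by norm_num)
    filter_upwards [hre] with s hs
    have h1 : ∀ n : ℕ, (1 - s) ≠ -n := by
      intro n h
      have h' := congrArg Complex.re h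
      simp only [Complex.sub_re, Complex.one_re, Complex.neg_re, Complex.natCast_re] at h'
      have : (0 : ℝ) ≤ (n : ℝ) := Nat.cast_nonneg n
      linarith
    have h2 : (1 - s) ≠ 1 := by
      intro h
      have : s = 0 := by linear_combination -h
      simp [this] at hs
    have := riemannZeta_one_sub h1 h2
    simp only [sub_sub_cancel] at this
    rw [this, hc]
    have : ((2 : ℂ) * Real.pi) ^ (-(1 - s)) = (2 * (Real.pi : ℂ)) ^ (s - 1) := by
      rw [neg_sub]
    rw [this]
    ring
  rw [hev.deriv_eq]
  -- differentiability of c at -2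
  have hc2 : DifferentiableAt ℂ c (-2) := by
    apply DifferentiableAt.mul
    apply DifferentiableAt.mul
    apply DifferentiableAt.mul
    · exact (differentiableAt_const _).sub
        (((differentiableAt_const _).sub differentiableAt_id).const_cpow (Or.inl two_ne_zero))
    · exact (differentiableAt_const _).mul
        ((differentiableAt_id.sub (differentiableAt_const _)).const_cpow
          (Or.inl (by simp [hπ])))
    · refine (Complex.differentiableAt_Gamma _ ?_).comp _
        ((differentiableAt_const _).sub differentiableAt_id)
      intro m h
      have h' := congrArg Complex.re h
      simp only [Complex.sub_re, Complex.one_re, Complex.neg_re, Complex.natCast_re,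
        Complex.neg_re] at h'
      have : (0 : ℝ) ≤ (m : ℝ) := Nat.cast_nonneg m
      norm_num at h'
      linarith
    · refine (differentiableAt_riemannZeta ?_).comp _
        ((differentiableAt_const _).sub differentiableAt_id)
      intro h
      have h' := congrArg Complex.re h
      norm_num at h'
  -- derivative of the cosine factor
  have hu : HasDerivAt (fun s : ℂ ↦ (Real.pi : ℂ) * (1 - s) / 2) (-(Real.pi : ℂ) / 2) (-2) := by
    have : HasDerivAt (fun s : ℂ ↦ (1 - s)) (-1) (-2) :=
      (hasDerivAt_id _).const_sub 1
    simpa [mul_comm, mul_div_assoc] using ((this.const_mul ((Real.pi : ℂ))).div_const 2)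
  have hcos : HasDerivAt (fun s : ℂ ↦ Complex.cos ((Real.pi : ℂ) * (1 - s) / 2))
      (-Complex.sin ((Real.pi : ℂ) * (1 - (-2)) / 2) * (-(Real.pi : ℂ) / 2)) (-2) :=
    (Complex.hasDerivAt_cos _).comp _ hu
  have hder := deriv_fun_mul hc2 hcos.differentiableAt
  rw [hder, hcos.deriv]
  -- evaluate trig values at 3π/2
  have harg : (Real.pi : ℂ) * (1 - (-2)) / 2 = (Real.pi : ℂ) + (Real.pi : ℂ) / 2 := by ring
  have hcosv : Complex.cos ((Real.pi : ℂ) * (1 - (-2)) / 2) = 0 := by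
    rw [harg, Complex.cos_add]
    simp [Complex.cos_pi, Complex.sin_pi, Complex.cos_pi_div_two]
  have hsinv : Complex.sin ((Real.pi : ℂ) * (1 - (-2)) / 2) = -1 := by
    rw [harg, Complex.sin_add]
    simp [Complex.cos_pi, Complex.sin_pi, Complex.sin_pi_div_two]
  rw [hcosv, hsinv]
  -- evaluate c (-2)
  have h8 : (2 : ℂ) ^ (1 - (-2) : ℂ) = 8 := by
    have : (1 - (-2) : ℂ) = ((3 : ℕ) : ℂ) := by norm_num
    rw [this, Complex.cpow_natCast]; norm_num
  have hpow : ((2 : ℂ) * Real.pi) ^ ((-2 : ℂ) - 1) = ((2 * (Real.pi : ℂ)) ^ (3 : ℕ))⁻¹ := by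
    have : ((-2 : ℂ) - 1) = ((-3 : ℤ) : ℂ) := by norm_num
    rw [this, Complex.cpow_intCast]
    rw [zpow_neg]
    norm_cast
  have hΓ : Complex.Gamma (1 - (-2)) = 2 := by
    have : (1 - (-2) : ℂ) = ((2 : ℕ) : ℂ) + 1 := by norm_num
    rw [this, Complex.Gamma_nat_eq_factorial]; norm_num
  have hζ : riemannZeta (1 - (-2) : ℂ) = riemannZeta 3 := by norm_num
  have hcval : c (-2) = (1 - 8) * (2 * ((2 * (Real.pi : ℂ)) ^ (3 : ℕ))⁻¹) * 2 * riemannZeta 3 := by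
    rw [hc]; simp only; rw [h8, hpow, hΓ, hζ]
  rw [hcval]
  field_simp
  ring
end

section
/- Let θ₁, θ₂ ∈ (0, π), set a = (θ₁+θ₂)/(2π) and b = (θ₁−θ₂)/(2π) (viewed in ℝ/ℤ), and let m be a positive even integer. Then Z(2−m, e^{2πia}) + Z(2−m, e^{−2πia}) − Z(2−m, e^{2πib}) − Z(2−m, e^{−2πib}) = 0, where for b ≡ 0 (mod 1) the value Z(s, 1) is interpreted as the Riemann zeta value ζ(s). (This says the two-variable Witten L-function ζ^W_{SU(2)}(s; g₁, g₂) of SU(2), for g₁, g₂ with eigenvalues e^{±iθ₁}, e^{±iθ₂}, vanishes at s = −m for every positive even integer m.) -/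
open Complex HurwitzZeta

lemma cosZeta_two_sub_even_indep (m : ℕ) (hm : 0 < m) (hme : Even m)
    (x y : UnitAddCircle) : cosZeta x (2 - (m : ℂ)) = cosZeta y (2 - (m : ℂ)) := by
  rcases eq_or_lt_of_le (Nat.succ_le_of_lt hm) with h2 | h2
  · -- m = 1 impossible since even
    exfalso
    rw [← h2] at hme
    simp [Nat.even_iff] at hme
  · rcases eq_or_lt_of_le (show 2 ≤ m by omega) with h3 | h3
    · -- m = 2
      have : (2 : ℂ) - (m : ℂ) = 0 := by rw [← h3]; push_cast; ring
      rw [this, cosZeta_apply_zero, cosZeta_apply_zero]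
    · -- m ≥ 3, even so m ≥ 4, m = 2n + 4
      obtain ⟨k, hk⟩ := hme
      have hk2 : 2 ≤ k := by omega
      obtain ⟨n, hn⟩ := Nat.exists_eq_add_of_le hk2
      have hcast : (2 : ℂ) - (m : ℂ) = -2 * ((n : ℂ) + 1) := by
        have : m = 2 * n + 4 := by omega
        rw [this]; push_cast; ring
      rw [hcast, cosZeta_neg_two_mul_nat_add_one, cosZeta_neg_two_mul_nat_add_one]

/-- The two-variable Witten L-function of `SU(2)` at regular elements with eigenvalues
`e^{±iθ₁}`, `e^{±iθ₂}` vanishes at `s = -m` for every positive even integer `m`: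
with `a = (θ₁+θ₂)/(2π)` and `b = (θ₁-θ₂)/(2π)` in `ℝ/ℤ`, the numerator
`Z(2-m, e^{2πia}) + Z(2-m, e^{-2πia}) - Z(2-m, e^{2πib}) - Z(2-m, e^{-2πib})` is zero.
(Mathlib's `expZeta` at the class of an integer equals the Riemann zeta function, so the
convention `Z(s, 1) = ζ(s)` is built in.) -/
theorem witten_SU2_two_variable_vanishing (θ₁ θ₂ : ℝ)
    (hθ₁ : θ₁ ∈ Set.Ioo 0 Real.pi) (hθ₂ : θ₂ ∈ Set.Ioo 0 Real.pi)
    (a b : ℝ) (ha : a = (θ₁ + θ₂) / (2 * Real.pi)) (hb : b = (θ₁ - θ₂) / (2 * Real.pi))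
    (m : ℕ) (hm : 0 < m) (hme : Even m) :
    expZeta (a : UnitAddCircle) (2 - (m : ℂ)) + expZeta ((-a : ℝ) : UnitAddCircle) (2 - (m : ℂ))
      - expZeta (b : UnitAddCircle) (2 - (m : ℂ))
      - expZeta ((-b : ℝ) : UnitAddCircle) (2 - (m : ℂ)) = 0 := by
  have hneg : ∀ r : ℝ, ((-r : ℝ) : UnitAddCircle) = -(r : UnitAddCircle) := fun r => rfl
  have key : ∀ x : UnitAddCircle,
      expZeta x (2 - (m : ℂ)) + expZeta (-x) (2 - (m : ℂ)) = 2 * cosZeta x (2 - (m : ℂ)) := by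
    intro x
    rw [cosZeta_eq]; ring
  rw [hneg, hneg]
  have h1 := key (a : UnitAddCircle)
  have h2 := key (b : UnitAddCircle)
  have h3 := cosZeta_two_sub_even_indep m hm hme (a : UnitAddCircle) (b : UnitAddCircle)
  linear_combination h1 - h2 + 2 * h3
end

section
/- Let x = i = e^{iπ/2}, so that x³ = x^{−1} = e^{2πi·(3/4)} and x^{−3} = x = e^{2πi·(1/4)}. Then (Z(1, x³) − 3·Z(1, x) + 3·Z(1, x^{−1}) − Z(1, x^{−3}))/(x − x^{−1})³ = 4·(Z(1, e^{2πi·(3/4)}) − Z(1, e^{2πi·(1/4)}))/(2i)³ = π/4. In particular this value is nonzero. (This says that the three-variable Witten L-function ζ^W_{SU(2)}(−2; g, g, g) is nonzero for g ∈ SU(2) with eigenvalues ±i.) -/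
open Complex HurwitzZeta

namespace WittenAux

open Real Set MeasureTheory Filter Topology

lemma integral_exp_neg_mul {b : ℝ} (hb : 0 < b) :
    ∫ t in Ioi (0:ℝ), Real.exp (-(b * t)) = 1 / b := by
  have := integral_comp_mul_left_Ioi (fun y : ℝ ↦ Real.exp (-y)) 0 hb
  simp only [mul_zero] at this
  rw [this, integral_exp_neg_Ioi_zero, smul_eq_mul, mul_one, one_div]

lemma intg {b : ℝ} (hb : 0 < b) (c : ℝ) :
    Integrable (fun t : ℝ ↦ c * Real.exp (-(b * t))) (volume.restrict (Ioi 0)) := by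
  refine Integrable.const_mul ?_ c
  exact (by simpa [neg_mul] using exp_neg_integrableOn_Ioi 0 hb :
    IntegrableOn (fun t : ℝ ↦ Real.exp (-(b * t))) (Ioi 0))

lemma integral_cexp {b : ℝ} (hb : 0 < b) (c : ℝ) :
    ∫ t in Ioi (0:ℝ), c * Real.exp (-(b * t)) = c * (1 / b) := by
  rw [MeasureTheory.integral_const_mul, integral_exp_neg_mul hb]

/-- The paired terms of the series defining `sinKernel (1/4)`. -/
noncomputable def F (j : ℕ) (t : ℝ) : ℝ :=
  2 * (4 * (j:ℝ) + 1) * Real.exp (-(π * (4 * (j:ℝ) + 1) ^ 2 * t))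
    - 2 * (4 * (j:ℝ) + 3) * Real.exp (-(π * (4 * (j:ℝ) + 3) ^ 2 * t))

lemma m1_pos (j : ℕ) : (0:ℝ) < 4 * (j:ℝ) + 1 := by positivity
lemma m3_pos (j : ℕ) : (0:ℝ) < 4 * (j:ℝ) + 3 := by positivity

lemma hasSum_F {t : ℝ} (ht : 0 < t) :
    HasSum (fun j ↦ F j t) (sinKernel ((1/4 : ℝ) : UnitAddCircle) t) := by
  have h := hasSum_nat_sinKernel (1/4 : ℝ) ht
  have h2 := (Nat.divModEquiv 4).symm.hasSum_iff.mpr h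
  refine h2.prod_fiberwise fun j ↦ ?_
  convert hasSum_fintype _ using 1
  dsimp [Nat.divModEquiv, Function.comp_def, F]
  rw [Fin.sum_univ_four]
  have e0 : 2 * π * (1/4) * ((j * 4 + (0:ℕ) : ℕ) : ℝ) = 0 + j * (2 * π) := by
    push_cast; ring
  have e1 : 2 * π * (1/4) * ((j * 4 + (1:ℕ) : ℕ) : ℝ) = π/2 + j * (2 * π) := by
    push_cast; ring
  have e2 : 2 * π * (1/4) * ((j * 4 + (2:ℕ) : ℕ) : ℝ) = π + j * (2 * π) := by
    push_cast; ring
  have e3 : 2 * π * (1/4) * ((j * 4 + (3:ℕ) : ℕ) : ℝ) = (π/2 + π) + j * (2 * π) := by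
    push_cast; ring
  simp only [Fin.isValue, Fin.val_zero, Fin.val_one, Fin.val_two]
  rw [show ((3 : Fin 4) : ℕ) = 3 from rfl, e0, e1, e2, e3,
    Real.sin_add_nat_mul_two_pi, Real.sin_add_nat_mul_two_pi, Real.sin_add_nat_mul_two_pi,
    Real.sin_add_nat_mul_two_pi, Real.sin_zero, Real.sin_pi, Real.sin_pi_div_two,
    Real.sin_add_pi, Real.sin_pi_div_two]
  push_cast
  ring_nf

lemma integrable_F (j : ℕ) : Integrable (F j) (volume.restrict (Ioi 0)) := by
  have h1 : Integrable (fun t : ℝ ↦ 2 * (4 * (j:ℝ) + 1) *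
      Real.exp (-(π * (4 * (j:ℝ) + 1) ^ 2 * t))) (volume.restrict (Ioi 0)) :=
    intg (by positivity) _
  have h3 : Integrable (fun t : ℝ ↦ 2 * (4 * (j:ℝ) + 3) *
      Real.exp (-(π * (4 * (j:ℝ) + 3) ^ 2 * t))) (volume.restrict (Ioi 0)) :=
    intg (by positivity) _
  exact h1.sub h3

lemma integral_F (j : ℕ) :
    ∫ t in Ioi (0:ℝ), F j t = 2 / π * (1 / (4 * (j:ℝ) + 1) - 1 / (4 * (j:ℝ) + 3)) := by
  have h1 : (0:ℝ) < π * (4 * (j:ℝ) + 1) ^ 2 := by positivity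
  have h3 : (0:ℝ) < π * (4 * (j:ℝ) + 3) ^ 2 := by positivity
  simp only [F]
  rw [MeasureTheory.integral_sub (intg h1 _) (intg h3 _), integral_cexp h1, integral_cexp h3]
  have e1 := (m1_pos j).ne'
  have e3 := (m3_pos j).ne'
  have hπ := Real.pi_ne_zero
  field_simp

lemma norm_integral_F_le (j : ℕ) :
    ∫ t in Ioi (0:ℝ), ‖F j t‖ ≤ 20 / π * (1 / ((j:ℝ) + 1) ^ 2) := by
  have hπ := Real.pi_pos
  set m := 4 * (j:ℝ) + 1 with hm
  set m' := 4 * (j:ℝ) + 3 with hm'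
  have hmp := m1_pos j
  have hmp' := m3_pos j
  have hb : (0:ℝ) < π * m ^ 2 := by positivity
  have hb' : (0:ℝ) < π * m' ^ 2 := by positivity
  have hI1 : Integrable (fun t : ℝ ↦ 2 * m * Real.exp (-(π * m ^ 2 * t))
      - 2 * m * Real.exp (-(π * m' ^ 2 * t))) (volume.restrict (Ioi 0)) :=
    (intg hb _).sub (intg hb' _)
  have key : ∫ t in Ioi (0:ℝ), ‖F j t‖
      ≤ ∫ t in Ioi (0:ℝ), (2 * m * Real.exp (-(π * m ^ 2 * t))
          - 2 * m * Real.exp (-(π * m' ^ 2 * t)) + 4 * Real.exp (-(π * m' ^ 2 * t))) := by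
    refine setIntegral_mono_on (integrable_F j).norm (hI1.add (intg hb' _))
      measurableSet_Ioi (fun t ht ↦ ?_)
    have ht' : 0 < t := mem_Ioi.mp ht
    have hexp : Real.exp (-(π * m' ^ 2 * t)) ≤ Real.exp (-(π * m ^ 2 * t)) := by
      apply Real.exp_le_exp.mpr
      have hsq : m ^ 2 ≤ m' ^ 2 := by nlinarith
      have h2 := mul_le_mul_of_nonneg_right hsq ht'.le
      nlinarith
    have h1 : F j t = 2 * m * (Real.exp (-(π * m ^ 2 * t)) - Real.exp (-(π * m' ^ 2 * t)))
        - 4 * Real.exp (-(π * m' ^ 2 * t)) := by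
      simp only [F, ← hm, ← hm']; ring
    rw [Real.norm_eq_abs, h1]
    have hnn : 0 ≤ 2 * m * (Real.exp (-(π * m ^ 2 * t)) - Real.exp (-(π * m' ^ 2 * t))) := by
      have := sub_nonneg.mpr hexp
      positivity
    have hnn2 : (0:ℝ) ≤ 4 * Real.exp (-(π * m' ^ 2 * t)) := by positivity
    rw [abs_sub_le_iff]
    constructor <;> nlinarith
  have hval : ∫ t in Ioi (0:ℝ), (2 * m * Real.exp (-(π * m ^ 2 * t))
      - 2 * m * Real.exp (-(π * m' ^ 2 * t)) + 4 * Real.exp (-(π * m' ^ 2 * t)))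
      = 2 * m * (1 / (π * m ^ 2)) - 2 * m * (1 / (π * m' ^ 2)) + 4 * (1 / (π * m' ^ 2)) := by
    rw [MeasureTheory.integral_add hI1 (intg hb' _),
      MeasureTheory.integral_sub (intg hb _) (intg hb' _),
      integral_cexp hb, integral_cexp hb', integral_cexp hb']
  have key2 : 2 * m * (1 / (π * m ^ 2)) - 2 * m * (1 / (π * m' ^ 2)) + 4 * (1 / (π * m' ^ 2))
      ≤ 20 / π * (1 / ((j:ℝ) + 1) ^ 2) := by
    have hx : (0:ℝ) ≤ (j:ℝ) := Nat.cast_nonneg j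
    have hj1 : (0:ℝ) < (j:ℝ) + 1 := by positivity
    rw [← sub_nonneg]
    have expand : 20 / π * (1 / ((j:ℝ) + 1) ^ 2)
        - (2 * m * (1 / (π * m ^ 2)) - 2 * m * (1 / (π * m' ^ 2)) + 4 * (1 / (π * m' ^ 2)))
        = (20 * (m * m' ^ 2) - (2 * m' ^ 2 - 2 * m ^ 2 + 4 * m) * ((j:ℝ) + 1) ^ 2)
          / (π * (m * m' ^ 2 * ((j:ℝ) + 1) ^ 2)) := by
      have hm0 : m ≠ 0 := hmp.ne'
      have hm0' : m' ≠ 0 := hmp'.ne'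
      field_simp
    rw [expand]
    apply div_nonneg _ (by positivity)
    simp only [hm, hm']
    nlinarith [sq_nonneg ((j:ℝ)), sq_nonneg ((j:ℝ) + 1), mul_nonneg hx hx,
      mul_nonneg (mul_nonneg hx hx) hx]
  exact key.trans (hval.le.trans key2)

/-- The paired Leibniz terms. -/
noncomputable def u (j : ℕ) : ℝ := 1 / (4 * (j:ℝ) + 1) - 1 / (4 * (j:ℝ) + 3)

lemma u_nonneg (j : ℕ) : 0 ≤ u j := by
  have h1 : (0:ℝ) < 4 * (j:ℝ) + 1 := by positivity
  have : (1:ℝ) / (4 * (j:ℝ) + 3) ≤ 1 / (4 * (j:ℝ) + 1) := by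
    apply one_div_le_one_div_of_le h1; linarith
  simpa [u] using sub_nonneg.mpr this

lemma u_le (j : ℕ) : u j ≤ 1 / ((j:ℝ) + 1) ^ 2 := by
  have h1 : (0:ℝ) < 4 * (j:ℝ) + 1 := by positivity
  have h3 : (0:ℝ) < 4 * (j:ℝ) + 3 := by positivity
  have hj : (0:ℝ) ≤ (j:ℝ) := Nat.cast_nonneg j
  have hj1 : (0:ℝ) < (j:ℝ) + 1 := by positivity
  rw [u, ← sub_nonneg]
  have expand : 1 / ((j:ℝ) + 1) ^ 2 - (1 / (4 * (j:ℝ) + 1) - 1 / (4 * (j:ℝ) + 3))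
      = ((4 * (j:ℝ) + 1) * (4 * (j:ℝ) + 3) - 2 * ((j:ℝ) + 1) ^ 2)
        / (((j:ℝ) + 1) ^ 2 * ((4 * (j:ℝ) + 1) * (4 * (j:ℝ) + 3))) := by
    field_simp
    ring
  rw [expand]
  apply div_nonneg _ (by positivity)
  nlinarith [mul_nonneg hj hj]

lemma summable_one_div_add_one_sq : Summable (fun n : ℕ ↦ 1 / ((n:ℝ) + 1) ^ 2) := by
  have h := Real.summable_one_div_nat_pow.mpr (le_refl 2) |>.comp_injective
    (add_left_injective 1)
  refine h.congr fun n ↦ ?_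
  push_cast [Function.comp]
  norm_num

lemma summable_u : Summable u :=
  Summable.of_nonneg_of_le u_nonneg u_le summable_one_div_add_one_sq

lemma partial_sum_u (k : ℕ) :
    ∑ j ∈ Finset.range k, u j = ∑ i ∈ Finset.range (2 * k), (-1 : ℝ) ^ i / (2 * i + 1) := by
  induction k with
  | zero => simp
  | succ k ih =>
    rw [Finset.sum_range_succ, ih, show 2 * (k + 1) = (2 * k + 1) + 1 by ring,
      Finset.sum_range_succ, Finset.sum_range_succ]
    have e1 : (-1 : ℝ) ^ (2 * k) = 1 := by
      rw [pow_mul]; norm_num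
    have e2 : (-1 : ℝ) ^ (2 * k + 1) = -1 := by
      rw [pow_succ, e1]; norm_num
    rw [e1, e2, u]
    push_cast
    ring

lemma hasSum_u : HasSum u (π / 4) := by
  obtain ⟨l, hl⟩ := summable_u
  have h1 : Tendsto (fun k ↦ ∑ j ∈ Finset.range k, u j) atTop (𝓝 l) :=
    hl.tendsto_sum_nat
  have h2 : Tendsto (fun k ↦ ∑ j ∈ Finset.range k, u j) atTop (𝓝 (π / 4)) := by
    have hmono : StrictMono (fun k : ℕ ↦ 2 * k) := strictMono_mul_left_of_pos (by norm_num)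
    have h := Real.tendsto_sum_pi_div_four.comp hmono.tendsto_atTop
    refine Tendsto.congr (fun k ↦ ?_) h
    simp only [Function.comp]
    exact (partial_sum_u k).symm
  rwa [tendsto_nhds_unique h1 h2] at hl

lemma integral_sinKernel :
    ∫ t in Ioi (0:ℝ), sinKernel ((1/4 : ℝ) : UnitAddCircle) t = 1 / 2 := by
  have hsum : Summable (fun j ↦ ∫ t in Ioi (0:ℝ), ‖F j t‖) := by
    refine Summable.of_nonneg_of_le (fun j ↦ ?_) norm_integral_F_le
      (summable_one_div_add_one_sq.mul_left (20 / π))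
    exact integral_nonneg fun t ↦ norm_nonneg _
  have hmain := hasSum_integral_of_summable_integral_norm
    (μ := volume.restrict (Ioi 0)) integrable_F hsum
  have heq : ∫ t in Ioi (0:ℝ), (∑' j, F j t)
      = ∫ t in Ioi (0:ℝ), sinKernel ((1/4 : ℝ) : UnitAddCircle) t :=
    setIntegral_congr_fun measurableSet_Ioi (fun t ht ↦ (hasSum_F (mem_Ioi.mp ht)).tsum_eq)
  rw [heq] at hmain
  have hval : HasSum (fun j ↦ ∫ t in Ioi (0:ℝ), F j t) (1/2 : ℝ) := by
    have h := hasSum_u.mul_left (2 / π)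
    have h2 : (2 / π) * (π / 4) = (1/2 : ℝ) := by
      field_simp
      norm_num
    rw [h2] at h
    refine h.congr_fun fun j ↦ ?_
    rw [integral_F, u]
  exact (hval.unique hmain).symm

lemma completedSinZeta_value : completedSinZeta ((1/4 : ℝ) : UnitAddCircle) 1 = 1 / 4 := by
  rw [completedSinZeta, show ((1:ℂ) + 1) / 2 = 1 by norm_num]
  rw [(isStrong_hurwitzOddFEPair ((1/4 : ℝ) : UnitAddCircle)).symm_Λ_eq]
  rw [show (hurwitzOddFEPair ((1/4 : ℝ) : UnitAddCircle)).g
      = Complex.ofReal ∘ sinKernel ((1/4 : ℝ) : UnitAddCircle) from rfl]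
  rw [mellin]
  simp only [sub_self, Complex.cpow_zero, one_smul, Function.comp_apply]
  have hcast : (∫ t in Ioi (0:ℝ), ((sinKernel ((1/4 : ℝ) : UnitAddCircle) t : ℝ) : ℂ))
      = ((∫ t in Ioi (0:ℝ), sinKernel ((1/4 : ℝ) : UnitAddCircle) t : ℝ) : ℂ) :=
    integral_ofReal
  rw [hcast, integral_sinKernel]
  norm_num

lemma sinZeta_value : sinZeta ((1/4 : ℝ) : UnitAddCircle) 1 = (π : ℂ) / 4 := by
  have hπ : (π : ℂ) ≠ 0 := Complex.ofReal_ne_zero.mpr Real.pi_ne_zero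
  rw [sinZeta, completedSinZeta_value,
    show (1 + 1 : ℂ) = 2 by norm_num, Gammaℝ_def,
    show (-(2:ℂ)/2) = -1 by norm_num, show ((2:ℂ)/2) = 1 by norm_num,
    cpow_neg_one, Complex.Gamma_one, mul_one]
  field_simp

lemma coe34 : (((3:ℝ)/4 : ℝ) : UnitAddCircle) = -(((1:ℝ)/4 : ℝ) : UnitAddCircle) := by
  have h : ((3:ℝ)/4 : ℝ) = (-(1/4) : ℝ) + 1 := by norm_num
  rw [show ((1:ℝ)/4 : ℝ) = (1/4 : ℝ) by norm_num, h, AddCircle.coe_add_period,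
    QuotientAddGroup.mk_neg]

lemma expZeta_diff :
    expZeta (((3:ℝ)/4 : ℝ) : UnitAddCircle) 1 - expZeta (((1:ℝ)/4 : ℝ) : UnitAddCircle) 1
      = -(π : ℂ) / 2 * I := by
  have h14 : (((1:ℝ)/4 : ℝ) : UnitAddCircle) = ((1/4 : ℝ) : UnitAddCircle) := by norm_num
  rw [coe34, h14, expZeta, expZeta, cosZeta_neg, sinZeta_neg, sinZeta_value]
  ring

end WittenAux

/-- The three-variable Witten L-function `ζ^W_{SU(2)}(-2; g, g, g)` for `g ∈ SU(2)` with
eigenvalues `±i` (i.e. `x = i`, `x³ = x⁻¹ = e^{2πi·(3/4)}`, `x⁻³ = x = e^{2πi·(1/4)}`)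
equals `π/4`; in particular it is nonzero. -/
theorem witten_SU2_three_variable_nonvanishing :
    (expZeta (((3 : ℝ) / 4 : ℝ) : UnitAddCircle) 1
        - 3 * expZeta (((1 : ℝ) / 4 : ℝ) : UnitAddCircle) 1
        + 3 * expZeta (((3 : ℝ) / 4 : ℝ) : UnitAddCircle) 1
        - expZeta (((1 : ℝ) / 4 : ℝ) : UnitAddCircle) 1) / (I - I⁻¹) ^ 3
      = 4 * (expZeta (((3 : ℝ) / 4 : ℝ) : UnitAddCircle) 1
          - expZeta (((1 : ℝ) / 4 : ℝ) : UnitAddCircle) 1) / (2 * I) ^ 3 ∧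
    4 * (expZeta (((3 : ℝ) / 4 : ℝ) : UnitAddCircle) 1
        - expZeta (((1 : ℝ) / 4 : ℝ) : UnitAddCircle) 1) / (2 * I) ^ 3
      = (Real.pi : ℂ) / 4 ∧
    ((Real.pi : ℂ) / 4 : ℂ) ≠ 0 := by
  refine ⟨by rw [inv_I]; ring_nf, ?_, ?_⟩
  · rw [WittenAux.expZeta_diff]
    have hI3 : (I : ℂ) ^ 3 = -I := by
      rw [pow_succ, Complex.I_sq]; ring
    have h8 : ((2 : ℂ) * I) ^ 3 = -8 * I := by
      rw [mul_pow, hI3]; norm_num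
    rw [h8, div_eq_iff (by simp [Complex.I_ne_zero] : (-8 * I : ℂ) ≠ 0)]
    ring
  · simp only [ne_eq, div_eq_zero_iff, Complex.ofReal_eq_zero, OfNat.ofNat_ne_zero, or_false]
    exact Real.pi_ne_zero
end

section
/- Let p ≥ 3 be an odd prime (regarded as a positive real number). Define, for s ∈ ℂ, Z₀(s) = 1 + 2·((p−1)/2)^{−s} + 2·((p+1)/2)^{−s} + ((p−1)/2)·(p−1)^{−s} + p^{−s} + ((p−3)/2)·(p+1)^{−s} and Z_∞(s) = (1/(1−p^{1−s}))·(4p·((p²−1)/2)^{−s} + ((p²−1)/2)·(p²−p)^{−s} + ((p−1)²/2)·(p²+p)^{−s}). Then Z₀(−2) + Z_∞(−2) = 0, Z₀(−1) + Z_∞(−1) = 0, and Z₀(0) + Z_∞(0) = −4/(p−1). (These are the values ζ^W_{SL₂(ℤ_p)}(−2) = 0, ζ^W_{SL₂(ℤ_p)}(−1) = 0, and ζ^W_{SL₂(ℤ_p)}(0) = −4/(p−1) of the Witten zeta function of SL₂(ℤ_p), via Jaikin-Zapirain's explicit formula ζ^W_{SL₂(ℤ_p)}(s) = Z₀(s)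 + Z_∞(s).) -/
open Complex

/-- Special values of the Witten zeta function of `SL₂(ℤ_p)` for an odd prime `p`, via
Jaikin-Zapirain's explicit formula `ζ^W_{SL₂(ℤ_p)}(s) = Z₀(s) + Z_∞(s)`:
`ζ^W_{SL₂(ℤ_p)}(-2) = 0`, `ζ^W_{SL₂(ℤ_p)}(-1) = 0`, `ζ^W_{SL₂(ℤ_p)}(0) = -4/(p-1)`. -/
theorem witten_SL2_Zp_special_values (p : ℕ) (hp : p.Prime) (hodd : Odd p)
    (Z₀ Zinf : ℂ → ℂ)
    (hZ₀ : ∀ s : ℂ, Z₀ s =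
      1 + 2 * ((((p : ℂ) - 1) / 2) ^ (-s)) + 2 * ((((p : ℂ) + 1) / 2) ^ (-s))
        + (((p : ℂ) - 1) / 2) * (((p : ℂ) - 1) ^ (-s)) + (p : ℂ) ^ (-s)
        + (((p : ℂ) - 3) / 2) * (((p : ℂ) + 1) ^ (-s)))
    (hZinf : ∀ s : ℂ, Zinf s =
      (1 / (1 - (p : ℂ) ^ (1 - s)))
        * (4 * (p : ℂ) * ((((p : ℂ) ^ 2 - 1) / 2) ^ (-s))
            + (((p : ℂ) ^ 2 - 1) / 2) * (((p : ℂ) ^ 2 - (p : ℂ)) ^ (-s))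
            + ((((p : ℂ) - 1) ^ 2) / 2) * (((p : ℂ) ^ 2 + (p : ℂ)) ^ (-s)))) :
    Z₀ (-2) + Zinf (-2) = 0 ∧ Z₀ (-1) + Zinf (-1) = 0 ∧
      Z₀ 0 + Zinf 0 = -4 / ((p : ℂ) - 1) := by
  have hpow : ∀ (x : ℂ) (n : ℕ), x ^ ((n : ℂ)) = x ^ n := fun x n => cpow_natCast x n
  have h2 : ∀ x : ℂ, x ^ ((2 : ℂ)) = x ^ (2 : ℕ) := fun x => by
    rw [show (2 : ℂ) = ((2 : ℕ) : ℂ) by norm_num, hpow]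
  have h3 : ∀ x : ℂ, x ^ ((3 : ℂ)) = x ^ (3 : ℕ) := fun x => by
    rw [show (3 : ℂ) = ((3 : ℕ) : ℂ) by norm_num, hpow]
  have hne : ∀ n : ℕ, 1 < n → ((n : ℂ)) ≠ 1 := fun n hn => by
    exact_mod_cast hn.ne'
  have hp2 : 2 ≤ p := hp.two_le
  have hq1 : ((p : ℂ)) ≠ 1 := hne p hp.one_lt
  have hq2 : ((p : ℂ)) ^ (2 : ℕ) ≠ 1 := by
    have := hne (p ^ 2) (Nat.one_lt_pow two_ne_zero hp.one_lt)
    push_cast at this; exact this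
  have hq3 : ((p : ℂ)) ^ (3 : ℕ) ≠ 1 := by
    have := hne (p ^ 3) (Nat.one_lt_pow three_ne_zero hp.one_lt)
    push_cast at this; exact this
  have hd1 : (1 : ℂ) - (p : ℂ) ≠ 0 := sub_ne_zero.2 (Ne.symm hq1)
  have hd2 : (1 : ℂ) - (p : ℂ) ^ (2 : ℕ) ≠ 0 := sub_ne_zero.2 (Ne.symm hq2)
  have hd3 : (1 : ℂ) - (p : ℂ) ^ (3 : ℕ) ≠ 0 := sub_ne_zero.2 (Ne.symm hq3)
  have hd1' : ((p : ℂ)) - 1 ≠ 0 := sub_ne_zero.2 hq1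
  refine ⟨?_, ?_, ?_⟩
  · rw [hZ₀, hZinf]
    norm_num [h2, h3]
    field_simp
    ring
  · rw [hZ₀, hZinf]
    norm_num [h2, h3, cpow_one]
    field_simp
    ring
  · rw [hZ₀, hZinf]
    norm_num [cpow_zero, cpow_one]
    field_simp
    ring
end

section
/- Let u(X) = X³ + X² − X − 1 − X^{−1}. Then for every real p > 0 with p ≠ 1 and every s ∈ ℂ, 1 + u(p)·p^{−3−2s} + u(p^{−1})·p^{−2−3s} + p^{−5−5s} = (1 − p^{−2−s})·(1 − p^{−1−s})·(1 + (p^{−1} + p^{−2})·p^{−s} + (1 + p^{−1})·p^{−2s} + p^{−2−3s}). (This is the factorization of the numerator of the explicit formula for the Witten zeta function of the congruence subgroup SL₃(ℤ_p)[p^m].) -/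
open Complex

/-- The Laurent polynomial `u(X) = X³ + X² - X - 1 - X⁻¹` appearing in the explicit
formula for the Witten zeta function of `SL₃(ℤ_p)[p^m]`. -/
noncomputable def u (X : ℂ) : ℂ := X ^ 3 + X ^ 2 - X - 1 - X⁻¹

/-- Factorization of the numerator of the explicit formula for the Witten zeta function
of the congruence subgroup `SL₃(ℤ_p)[p^m]`. -/
theorem witten_SL3_numerator_factorization (p : ℝ) (hp : 0 < p) (hp1 : p ≠ 1) (s : ℂ) :
    1 + u (p : ℂ) * (p : ℂ) ^ (-3 - 2 * s) + u ((p : ℂ)⁻¹) * (p : ℂ) ^ (-2 - 3 * s)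
        + (p : ℂ) ^ (-5 - 5 * s)
      = (1 - (p : ℂ) ^ (-2 - s)) * (1 - (p : ℂ) ^ (-1 - s))
        * (1 + ((p : ℂ)⁻¹ + ((p : ℂ)⁻¹) ^ 2) * (p : ℂ) ^ (-s)
            + (1 + (p : ℂ)⁻¹) * (p : ℂ) ^ (-2 * s) + (p : ℂ) ^ (-2 - 3 * s)) := by
  have hz : (p : ℂ) ≠ 0 := by exact_mod_cast hp.ne'
  have hadd : ∀ a b : ℂ, (p : ℂ) ^ (a + b) = (p : ℂ) ^ a * (p : ℂ) ^ b :=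
    fun a b => cpow_add _ _ hz
  have e1 : (-3 - 2 * s : ℂ) = -1 + (-1 + (-1 + (-s + -s))) := by ring
  have e2 : (-2 - 3 * s : ℂ) = -1 + (-1 + (-s + (-s + -s))) := by ring
  have e3 : (-5 - 5 * s : ℂ)
      = -1 + (-1 + (-1 + (-1 + (-1 + (-s + (-s + (-s + (-s + -s)))))))) := by ring
  have e4 : (-2 - s : ℂ) = -1 + (-1 + -s) := by ring
  have e5 : (-1 - s : ℂ) = -1 + -s := by ring
  have e6 : (-2 * s : ℂ) = -s + -s := by ring
  rw [e1, e2, e3, e4, e5, e6]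
  simp only [hadd, cpow_neg_one]
  unfold u
  rw [inv_inv]
  have hpq : (p : ℂ) * (p : ℂ)⁻¹ = 1 := mul_inv_cancel₀ hz
  set q : ℂ := (p : ℂ)⁻¹ with hq
  set t : ℂ := (p : ℂ) ^ (-s) with ht
  linear_combination (t ^ 2 + q * t ^ 2 - q * t ^ 3 - q ^ 2 * t ^ 2
      + (p : ℂ) * q * t ^ 2 + (p : ℂ) * q ^ 2 * t ^ 2
      + (p : ℂ) ^ 2 * q ^ 2 * t ^ 2) * hpq
end

section
/- Let u(X) = X³ + X² − X − 1 − X^{−1}, let m be a positive integer, and let s ∈ ℂ with s ≠ 1/2 and s ≠ 2/3. Then, as the real variable p tends to 1 from the right, p^{8m}·(1 + u(p)·p^{−3−2s} + u(p^{−1})·p^{−2−3s} + p^{−5−5s})/((1 − p^{1−2s})·(1 − p^{2−3s})) tends to (s+1)(s+2)/((s − 1/2)(s − 2/3)). (This is the 'absolute limit' ζ^W_{SL₃(ℤ₁)[1^m]}(s) = (s+1)(s+2)/((s−1/2)(s−2/3)) of the Witten zeta function of the congruence subgroup SL₃(ℤ_p)[p^m].) -/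
open Complex Filter

lemma slope_exp (s a : ℂ) :
    Tendsto (fun t : ℝ => (Complex.exp (a * t) - 1) / (t : ℂ)) (nhdsWithin 0 {(0:ℝ)}ᶜ) (nhds a) := by
  have h : HasDerivAt (fun t : ℝ => Complex.exp (a * t)) a 0 := by
    have h1 : HasDerivAt (fun t : ℝ => ((t : ℂ))) 1 0 := by
      simpa using (hasDerivAt_id (0:ℝ)).ofReal_comp
    simpa using (h1.const_mul a).cexp
  rw [hasDerivAt_iff_tendsto_slope] at h
  refine h.congr fun t => ?_
  simp [slope_def_field, div_eq_inv_mul, Complex.real_smul, slope, Complex.ofReal_inv]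

lemma log_to_punct : Tendsto Real.log (nhdsWithin 1 (Set.Ioi 1)) (nhdsWithin 0 {(0:ℝ)}ᶜ) := by
  rw [tendsto_nhdsWithin_iff]
  constructor
  · have := (Real.continuousAt_log one_ne_zero).continuousWithinAt (s := Set.Ioi 1)
    simpa [Real.log_one] using this.tendsto
  · filter_upwards [self_mem_nhdsWithin] with p hp
    exact (Real.log_pos hp).ne'

set_option maxHeartbeats 800000 in
/-- The "absolute limit" of the Witten zeta function of the congruence subgroup
`SL₃(ℤ_p)[p^m]`: as the real variable `p → 1⁺`, the explicit formula tends to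
`(s+1)(s+2)/((s-1/2)(s-2/3))` for `s ≠ 1/2, 2/3`. -/
theorem witten_SL3_congruence_absolute_limit (m : ℕ) (hm : 0 < m) (s : ℂ)
    (hs1 : s ≠ 1 / 2) (hs2 : s ≠ 2 / 3) :
    Tendsto
      (fun p : ℝ ↦ (p : ℂ) ^ (8 * m)
        * (1 + u (p : ℂ) * (p : ℂ) ^ (-3 - 2 * s) + u ((p : ℂ)⁻¹) * (p : ℂ) ^ (-2 - 3 * s)
            + (p : ℂ) ^ (-5 - 5 * s))
        / ((1 - (p : ℂ) ^ (1 - 2 * s)) * (1 - (p : ℂ) ^ (2 - 3 * s))))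
      (nhdsWithin 1 (Set.Ioi 1))
      (nhds ((s + 1) * (s + 2) / ((s - 1 / 2) * (s - 2 / 3)))) := by
  have h12 : s - 1/2 ≠ 0 := sub_ne_zero.mpr hs1
  have h23 : s - 2/3 ≠ 0 := sub_ne_zero.mpr hs2
  have hd1 : -(1 - 2*s) ≠ 0 := by
    intro h; apply h12; linear_combination h/2
  have hd2 : -(2 - 3*s) ≠ 0 := by
    intro h; apply h23; linear_combination h/3
  set F : ℝ → ℂ := fun t =>
    (Complex.exp ↑t)^(8*m) *
      (((Complex.exp (-s * ↑t) - Complex.exp (2 * ↑t)) / (↑t:ℂ)) *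
       ((Complex.exp (-(4*s) * ↑t) + Complex.exp ((2 - 3*s) * ↑t) + Complex.exp (-(2*s) * ↑t)
          + Complex.exp ((1 - 2*s) * ↑t) - Complex.exp ((2 - 2*s) * ↑t)
          - Complex.exp ((3 - 2*s) * ↑t) - Complex.exp ((1 - s) * ↑t)
          - Complex.exp (3 * ↑t)) / (↑t:ℂ)))
      / Complex.exp (5 * ↑t)
      / (((1 - Complex.exp ((1 - 2*s) * ↑t)) / (↑t:ℂ)) *
         ((1 - Complex.exp ((2 - 3*s) * ↑t)) / (↑t:ℂ))) with hFdef
  have hA : Tendsto (fun t : ℝ =>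
      (Complex.exp (-s * ↑t) - Complex.exp (2 * ↑t)) / (↑t:ℂ))
      (nhdsWithin 0 {(0:ℝ)}ᶜ) (nhds (-s - 2)) := by
    refine ((slope_exp s (-s)).sub (slope_exp s 2)).congr fun t => by ring
  have hQ : Tendsto (fun t : ℝ =>
      (Complex.exp (-(4*s) * ↑t) + Complex.exp ((2 - 3*s) * ↑t) + Complex.exp (-(2*s) * ↑t)
          + Complex.exp ((1 - 2*s) * ↑t) - Complex.exp ((2 - 2*s) * ↑t)
          - Complex.exp ((3 - 2*s) * ↑t) - Complex.exp ((1 - s) * ↑t)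
          - Complex.exp (3 * ↑t)) / (↑t:ℂ))
      (nhdsWithin 0 {(0:ℝ)}ᶜ)
      (nhds (-(4*s) + (2 - 3*s) + -(2*s) + (1 - 2*s) - (2 - 2*s) - (3 - 2*s) - (1 - s) - 3)) := by
    have h8 := (((((((slope_exp s (-(4*s))).add (slope_exp s (2-3*s))).add
      (slope_exp s (-(2*s)))).add (slope_exp s (1-2*s))).sub
      (slope_exp s (2-2*s))).sub (slope_exp s (3-2*s))).sub
      (slope_exp s (1-s))).sub (slope_exp s 3)
    exact h8.congr fun t => by ring
  have hB1 : Tendsto (fun t : ℝ => (1 - Complex.exp ((1 - 2*s) * ↑t)) / (↑t:ℂ))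
      (nhdsWithin 0 {(0:ℝ)}ᶜ) (nhds (-(1 - 2*s))) := by
    refine (slope_exp s (1-2*s)).neg.congr fun t => by ring
  have hB2 : Tendsto (fun t : ℝ => (1 - Complex.exp ((2 - 3*s) * ↑t)) / (↑t:ℂ))
      (nhdsWithin 0 {(0:ℝ)}ᶜ) (nhds (-(2 - 3*s))) := by
    refine (slope_exp s (2-3*s)).neg.congr fun t => by ring
  have hE8 : Tendsto (fun t : ℝ => (Complex.exp ↑t)^(8*m))
      (nhdsWithin 0 {(0:ℝ)}ᶜ) (nhds 1) := by
    have hc : Continuous fun t : ℝ => (Complex.exp ↑t)^(8*m) := by continuity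
    have := (hc.tendsto 0).mono_left (nhdsWithin_le_nhds (s := {(0:ℝ)}ᶜ))
    simpa using this
  have hE5 : Tendsto (fun t : ℝ => Complex.exp (5 * ↑t))
      (nhdsWithin 0 {(0:ℝ)}ᶜ) (nhds 1) := by
    have hc : Continuous fun t : ℝ => Complex.exp (5 * ↑t) := by continuity
    have := (hc.tendsto 0).mono_left (nhdsWithin_le_nhds (s := {(0:ℝ)}ᶜ))
    simpa using this
  have hFlim : Tendsto F (nhdsWithin 0 {(0:ℝ)}ᶜ)
      (nhds (1 * ((-s - 2) *
        (-(4*s) + (2 - 3*s) + -(2*s) + (1 - 2*s) - (2 - 2*s) - (3 - 2*s) - (1 - s) - 3)) / 1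
        / (-(1 - 2*s) * -(2 - 3*s)))) := by
    exact ((hE8.mul (hA.mul hQ)).div hE5 one_ne_zero).div (hB1.mul hB2)
      (mul_ne_zero hd1 hd2)
  have hval : (s + 1) * (s + 2) / ((s - 1 / 2) * (s - 2 / 3))
      = 1 * ((-s - 2) *
        (-(4*s) + (2 - 3*s) + -(2*s) + (1 - 2*s) - (2 - 2*s) - (3 - 2*s) - (1 - s) - 3)) / 1
        / (-(1 - 2*s) * -(2 - 3*s)) := by
    field_simp
    ring
  rw [hval]
  refine Tendsto.congr' ?_ (hFlim.comp log_to_punct)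
  filter_upwards [self_mem_nhdsWithin] with p hp
  have hp1 : (1:ℝ) < p := hp
  have hp0 : (0:ℝ) < p := lt_trans one_pos hp1
  have hlt : Real.log p ≠ 0 := (Real.log_pos hp1).ne'
  simp only [Function.comp, hFdef]
  set t := Real.log p with htdef
  have htc : ((t:ℝ):ℂ) ≠ 0 := Complex.ofReal_ne_zero.mpr hlt
  have hcpow : ∀ c : ℂ, (p:ℂ) ^ c = Complex.exp (c * (↑t:ℂ)) := by
    intro c
    rw [Complex.cpow_def_of_ne_zero (by exact_mod_cast hp0.ne'), ← Complex.ofReal_log hp0.le,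
      mul_comm]
  have hpt : (p:ℂ) = Complex.exp (↑t:ℂ) := by
    rw [← Complex.ofReal_exp, htdef, Real.exp_log hp0]
  simp only [hcpow]
  rw [hpt]
  set W := Complex.exp ((t:ℝ):ℂ) with hWdef
  set Z := Complex.exp (s * ((t:ℝ):ℂ)) with hZdef
  have hW : W ≠ 0 := Complex.exp_ne_zero _
  have hZ : Z ≠ 0 := Complex.exp_ne_zero _
  have eW : ∀ n : ℕ, Complex.exp ((n:ℂ) * (↑t:ℂ)) = W ^ n := fun n => Complex.exp_nat_mul _ n
  have eZ : ∀ n : ℕ, Complex.exp ((n:ℂ) * (s * (↑t:ℂ))) = Z ^ n := fun n => Complex.exp_nat_mul _ n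
  have e1 : Complex.exp ((-3 - 2*s) * (↑t:ℂ)) = (W^3 * Z^2)⁻¹ := by
    rw [show (-3 - 2*s) * (↑t:ℂ) = -(((3:ℕ):ℂ) * ↑t + ((2:ℕ):ℂ) * (s * ↑t)) by push_cast; ring,
      Complex.exp_neg, Complex.exp_add, eW, eZ]
  have e2 : Complex.exp ((-2 - 3*s) * (↑t:ℂ)) = (W^2 * Z^3)⁻¹ := by
    rw [show (-2 - 3*s) * (↑t:ℂ) = -(((2:ℕ):ℂ) * ↑t + ((3:ℕ):ℂ) * (s * ↑t)) by push_cast; ring,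
      Complex.exp_neg, Complex.exp_add, eW, eZ]
  have e3 : Complex.exp ((-5 - 5*s) * (↑t:ℂ)) = (W^5 * Z^5)⁻¹ := by
    rw [show (-5 - 5*s) * (↑t:ℂ) = -(((5:ℕ):ℂ) * ↑t + ((5:ℕ):ℂ) * (s * ↑t)) by push_cast; ring,
      Complex.exp_neg, Complex.exp_add, eW, eZ]
  have e4 : Complex.exp ((1 - 2*s) * (↑t:ℂ)) = W * (Z^2)⁻¹ := by
    rw [show (1 - 2*s) * (↑t:ℂ) = ↑t + -(((2:ℕ):ℂ) * (s * ↑t)) by push_cast; ring,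
      Complex.exp_add, Complex.exp_neg, eZ]
  have e5 : Complex.exp ((2 - 3*s) * (↑t:ℂ)) = W^2 * (Z^3)⁻¹ := by
    rw [show (2 - 3*s) * (↑t:ℂ) = ((2:ℕ):ℂ) * ↑t + -(((3:ℕ):ℂ) * (s * ↑t)) by push_cast; ring,
      Complex.exp_add, Complex.exp_neg, eW, eZ]
  have e6 : Complex.exp (-s * (↑t:ℂ)) = Z⁻¹ := by
    rw [show -s * (↑t:ℂ) = -(s * ↑t) by ring, Complex.exp_neg]
  have e7 : Complex.exp ((2:ℂ) * (↑t:ℂ)) = W^2 := by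
    rw [show (2:ℂ) * (↑t:ℂ) = ((2:ℕ):ℂ) * ↑t by norm_num, eW]
  have e8 : Complex.exp ((3:ℂ) * (↑t:ℂ)) = W^3 := by
    rw [show (3:ℂ) * (↑t:ℂ) = ((3:ℕ):ℂ) * ↑t by norm_num, eW]
  have e9 : Complex.exp ((5:ℂ) * (↑t:ℂ)) = W^5 := by
    rw [show (5:ℂ) * (↑t:ℂ) = ((5:ℕ):ℂ) * ↑t by norm_num, eW]
  have e10 : Complex.exp (-(4*s) * (↑t:ℂ)) = (Z^4)⁻¹ := by
    rw [show -(4*s) * (↑t:ℂ) = -(((4:ℕ):ℂ) * (s * ↑t)) by push_cast; ring,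
      Complex.exp_neg, eZ]
  have e11 : Complex.exp (-(2*s) * (↑t:ℂ)) = (Z^2)⁻¹ := by
    rw [show -(2*s) * (↑t:ℂ) = -(((2:ℕ):ℂ) * (s * ↑t)) by push_cast; ring,
      Complex.exp_neg, eZ]
  have e12 : Complex.exp ((2 - 2*s) * (↑t:ℂ)) = W^2 * (Z^2)⁻¹ := by
    rw [show (2 - 2*s) * (↑t:ℂ) = ((2:ℕ):ℂ) * ↑t + -(((2:ℕ):ℂ) * (s * ↑t)) by push_cast; ring,
      Complex.exp_add, Complex.exp_neg, eW, eZ]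
  have e13 : Complex.exp ((3 - 2*s) * (↑t:ℂ)) = W^3 * (Z^2)⁻¹ := by
    rw [show (3 - 2*s) * (↑t:ℂ) = ((3:ℕ):ℂ) * ↑t + -(((2:ℕ):ℂ) * (s * ↑t)) by push_cast; ring,
      Complex.exp_add, Complex.exp_neg, eW, eZ]
  have e14 : Complex.exp ((1 - s) * (↑t:ℂ)) = W * Z⁻¹ := by
    rw [show (1 - s) * (↑t:ℂ) = ↑t + -(s * ↑t) by ring, Complex.exp_add, Complex.exp_neg]
  rw [e1, e2, e3, e4, e5, e6, e7, e8, e9, e10, e11, e12, e13, e14]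
  simp only [u, inv_inv]
  have h2 : ((t:ℝ):ℂ) * ((t:ℝ):ℂ) ≠ 0 := mul_ne_zero htc htc
  have hw5 : (W^5 : ℂ) ≠ 0 := pow_ne_zero _ hW
  have div_helper : ∀ x y e D : ℂ, e ≠ 0 →
      x * (y / (((t:ℝ):ℂ) * ((t:ℝ):ℂ))) / e / (D / (((t:ℝ):ℂ) * ((t:ℝ):ℂ))) = x * y / e / D := by
    intro x y e D he
    rw [div_div_eq_mul_div]
    congr 1
    field_simp
  rw [div_mul_div_comm, div_mul_div_comm, div_helper _ _ _ _ hw5]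
  rw [mul_div_assoc]
  congr 2
  rw [div_eq_iff hw5]
  have h : W * W⁻¹ = 1 := mul_inv_cancel₀ hW
  linear_combination (((-1)*Z⁻¹^3 + (-1)*Z⁻¹^5 + (1)*W^1*Z⁻¹^2 + (-1)*W^1*Z⁻¹^3 + (-1)*W^1*W⁻¹^1*Z⁻¹^3 + (-1)*W^1*W⁻¹^1*Z⁻¹^5 + (1)*W^2*Z⁻¹^2 + (1)*W^2*Z⁻¹^3 + (1)*W^2*W⁻¹^1*Z⁻¹^2 + (-1)*W^2*W⁻¹^1*Z⁻¹^3 + (-1)*W^2*W⁻¹^2*Z⁻¹^3 + (-1)*W^2*W⁻¹^2*Z⁻¹^5 + (1)*W^3*Z⁻¹^2 + (1)*W^3*Z⁻¹^3 + (1)*W^3*W⁻¹^1*Z⁻¹^2 + (1)*W^3*W⁻¹^1*Z⁻¹^3 + (1)*W^3*W⁻¹^2*Z⁻¹^2 + (-1)*W^3*W⁻¹^2*Z⁻¹^3 + (-1)*W^3*W⁻¹^3*Z⁻¹^3 + (-1)*W^3*W⁻¹^3*Z⁻¹^5 + (-1)*W^4*Z⁻¹^2 + (1)*W^4*Z⁻¹^3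 + (1)*W^4*W⁻¹^1*Z⁻¹^2 + (1)*W^4*W⁻¹^1*Z⁻¹^3 + (1)*W^4*W⁻¹^2*Z⁻¹^2 + (1)*W^4*W⁻¹^2*Z⁻¹^3 + (1)*W^4*W⁻¹^3*Z⁻¹^2 + (-1)*W^4*W⁻¹^3*Z⁻¹^3 + (-1)*W^4*W⁻¹^4*Z⁻¹^3 + (-1)*W^4*W⁻¹^4*Z⁻¹^5 + (-1)*W^5*Z⁻¹^2 + (-1)*W^5*W⁻¹^1*Z⁻¹^2 + (1)*W^5*W⁻¹^1*Z⁻¹^3 + (1)*W^5*W⁻¹^2*Z⁻¹^2 + (-1)*W^6*W⁻¹^1*Z⁻¹^2 + (-1)*W^6*W⁻¹^2*Z⁻¹^2 + (-1)*W^7*W⁻¹^2*Z⁻¹^2)) * h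
end
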